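/- arXiv:2406.08395 — 2 statements merged into one kernel-verified Lean document; each statement's English description precedes it below -/
import Mathlib

section
/- Let S and A be nonempty finite sets, let (Ψ, +) be a normed additive commutative group, let B ⊆ Ψ be a nonempty set, let γ ∈ [0,1), let r : S × A → ℝ be a bounded reward function, and let p : Ψ → S → A → PMF(S) be a family of transition kernels. Define the optimal time-constrained robust Bellman operator T_B^* on bounded functions V : S × Ψ → ℝ by (T_B^* V)(s, ψ) = sup_{μ ∈ PMF(A)} inf_{b ∈ B} Σ_{a ∈ A} μ(a) · ( r(s,a) + γ · Σ_{s' ∈ S} p(ψ+b)(s,a)(s') · V(s', ψ+b) ). Then T_B^* is a γ-contraction in the supremum norm: for all bounded V₁, V₂ : S × Ψ → ℝ, sup_{(s,ψ)} |T_B^* V₁(s,ψ) − T_B^* V₂(s,ψ)| ≤ γ · sup_{(s,ψ)} |V₁(s,ψ) − V₂(s,ψ)|. -/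
noncomputable section

/-- The optimal time-constrained robust Bellman operator `T_B^*`:
`(T_B^* V)(s, ψ) = sup_{μ ∈ PMF(A)} inf_{b ∈ B} ∑_a μ(a) (r(s,a) + γ ∑_{s'} p_{ψ+b}(s,a)(s') V(s', ψ+b))`. -/
def TBstar {S A Ψ : Type*} [Fintype S] [Fintype A] [NormedAddCommGroup Ψ]
    (B : Set Ψ) (γ : ℝ) (r : S × A → ℝ) (p : Ψ → S → A → PMF S)
    (V : S × Ψ → ℝ) : S × Ψ → ℝ :=
  fun x =>
    ⨆ μ : PMF A, sInf ((fun b : Ψ =>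
      ∑ a : A, (μ a).toReal *
        (r (x.1, a) + γ * ∑ s' : S, ((p (x.2 + b) x.1 a) s').toReal * V (s', x.2 + b))) '' B)

lemma pmf_sum_toReal_eq_one {A : Type*} [Fintype A] (μ : PMF A) :
    ∑ a : A, (μ a).toReal = 1 := by
  rw [← ENNReal.toReal_sum (fun a _ => μ.apply_ne_top a), ← tsum_fintype (L := SummationFilter.unconditional _)]
  simp only [μ.tsum_coe, ENNReal.toReal_one]

lemma pmf_weighted_sum_le {A : Type*} [Fintype A] (μ : PMF A) {f : A → ℝ} {c : ℝ}
    (h : ∀ a, f a ≤ c) : ∑ a : A, (μ a).toReal * f a ≤ c := by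
  calc ∑ a : A, (μ a).toReal * f a ≤ ∑ a : A, (μ a).toReal * c :=
        Finset.sum_le_sum fun a _ => mul_le_mul_of_nonneg_left (h a) ENNReal.toReal_nonneg
    _ = c := by rw [← Finset.sum_mul, pmf_sum_toReal_eq_one]; ring

lemma le_pmf_weighted_sum {A : Type*} [Fintype A] (μ : PMF A) {f : A → ℝ} {c : ℝ}
    (h : ∀ a, c ≤ f a) : c ≤ ∑ a : A, (μ a).toReal * f a := by
  have := pmf_weighted_sum_le μ (f := fun a => -f a) (c := -c) (fun a => neg_le_neg (h a))
  simp only [mul_neg, Finset.sum_neg_distrib] at this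
  linarith

lemma pmf_weighted_sum_abs_le {A : Type*} [Fintype A] (μ : PMF A) {f : A → ℝ} {c : ℝ}
    (h : ∀ a, |f a| ≤ c) : |∑ a : A, (μ a).toReal * f a| ≤ c := by
  rw [abs_le]
  exact ⟨le_pmf_weighted_sum μ (fun a => (abs_le.mp (h a)).1),
    pmf_weighted_sum_le μ (fun a => (abs_le.mp (h a)).2)⟩

/-- The optimal time-constrained robust Bellman operator `T_B^*` is a
`γ`-contraction in the supremum norm on bounded functions `S × Ψ → ℝ`. -/
theorem TBstar_contraction {S A Ψ : Type*} [Fintype S] [Fintype A] [Nonempty S] [Nonempty A]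
    [NormedAddCommGroup Ψ]
    (B : Set Ψ) (hB : B.Nonempty)
    (γ : ℝ) (hγ0 : 0 ≤ γ) (hγ1 : γ < 1)
    (r : S × A → ℝ) (hr : ∃ C : ℝ, ∀ x, |r x| ≤ C)
    (p : Ψ → S → A → PMF S)
    (V₁ V₂ : S × Ψ → ℝ)
    (hV₁ : ∃ C : ℝ, ∀ x, |V₁ x| ≤ C) (hV₂ : ∃ C : ℝ, ∀ x, |V₂ x| ≤ C) :
    ⨆ x : S × Ψ, |TBstar B γ r p V₁ x - TBstar B γ r p V₂ x| ≤
      γ * ⨆ x : S × Ψ, |V₁ x - V₂ x| := by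
  haveI : Nonempty Ψ := ⟨0⟩
  obtain ⟨Cr, hCr⟩ := hr
  obtain ⟨C₁, hC₁⟩ := hV₁
  obtain ⟨C₂, hC₂⟩ := hV₂
  obtain ⟨b₀, hb₀⟩ := hB
  set D : ℝ := ⨆ x : S × Ψ, |V₁ x - V₂ x| with hD
  -- boundedness of |V₁ - V₂|
  have hDbdd : BddAbove (Set.range fun x : S × Ψ => |V₁ x - V₂ x|) := by
    refine ⟨C₁ + C₂, ?_⟩
    rintro y ⟨x, rfl⟩
    calc |V₁ x - V₂ x| ≤ |V₁ x| + |V₂ x| := abs_sub _ _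
      _ ≤ C₁ + C₂ := add_le_add (hC₁ x) (hC₂ x)
  have hDle : ∀ x : S × Ψ, |V₁ x - V₂ x| ≤ D := fun x => le_ciSup hDbdd x
  have hD0 : 0 ≤ D := le_trans (abs_nonneg _) (hDle (Classical.arbitrary _))
  set CW : ℝ := max C₁ C₂ with hCW
  -- the main one-sided estimate, stated symmetrically in the two value functions
  have main : ∀ W₁ W₂ : S × Ψ → ℝ, (∀ y, |W₁ y| ≤ CW) → (∀ y, |W₂ y| ≤ CW) →
      (∀ y, W₁ y - W₂ y ≤ D) →
      ∀ x, TBstar B γ r p W₁ x ≤ TBstar B γ r p W₂ x + γ * D := by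
    intro W₁ W₂ hW₁ hW₂ hW x
    set G : (S × Ψ → ℝ) → PMF A → Ψ → ℝ := fun V μ b =>
      ∑ a : A, (μ a).toReal *
        (r (x.1, a) + γ * ∑ s' : S, ((p (x.2 + b) x.1 a) s').toReal * V (s', x.2 + b)) with hG
    have hGbound : ∀ (V : S × Ψ → ℝ), (∀ y, |V y| ≤ CW) →
        ∀ (μ : PMF A) (b : Ψ), |G V μ b| ≤ Cr + γ * CW := by
      intro V hV μ b
      apply pmf_weighted_sum_abs_le
      intro a
      have hinner : |∑ s' : S, ((p (x.2 + b) x.1 a) s').toReal * V (s', x.2 + b)| ≤ CW :=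
        pmf_weighted_sum_abs_le _ (fun s' => hV _)
      calc |r (x.1, a) + γ * ∑ s' : S, ((p (x.2 + b) x.1 a) s').toReal * V (s', x.2 + b)|
          ≤ |r (x.1, a)| + |γ * ∑ s' : S, ((p (x.2 + b) x.1 a) s').toReal * V (s', x.2 + b)| :=
            abs_add_le _ _
        _ ≤ Cr + γ * CW := by
            refine add_le_add (hCr _) ?_
            rw [abs_mul, abs_of_nonneg hγ0]
            exact mul_le_mul_of_nonneg_left hinner hγ0
    have hGdiff : ∀ (μ : PMF A) (b : Ψ), G W₁ μ b ≤ G W₂ μ b + γ * D := by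
      intro μ b
      have key : G W₁ μ b - G W₂ μ b ≤ γ * D := by
        have heq : G W₁ μ b - G W₂ μ b = ∑ a : A, (μ a).toReal *
            (γ * ∑ s' : S, ((p (x.2 + b) x.1 a) s').toReal *
              (W₁ (s', x.2 + b) - W₂ (s', x.2 + b))) := by
          simp only [hG]
          rw [← Finset.sum_sub_distrib]
          refine Finset.sum_congr rfl fun a _ => ?_
          have hsub : ∑ s' : S, ((p (x.2 + b) x.1 a) s').toReal *
              (W₁ (s', x.2 + b) - W₂ (s', x.2 + b)) =
              (∑ s' : S, ((p (x.2 + b) x.1 a) s').toReal * W₁ (s', x.2 + b)) -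
              ∑ s' : S, ((p (x.2 + b) x.1 a) s').toReal * W₂ (s', x.2 + b) := by
            rw [← Finset.sum_sub_distrib]
            exact Finset.sum_congr rfl fun s' _ => by ring
          rw [hsub]; ring
        rw [heq]
        apply pmf_weighted_sum_le
        intro a
        have hss : ∑ s' : S, ((p (x.2 + b) x.1 a) s').toReal *
            (W₁ (s', x.2 + b) - W₂ (s', x.2 + b)) ≤ D :=
          pmf_weighted_sum_le _ (fun s' => hW _)
        exact mul_le_mul_of_nonneg_left hss hγ0
      linarith
    have hBddBelow : ∀ (V : S × Ψ → ℝ), (∀ y, |V y| ≤ CW) →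
        ∀ μ : PMF A, BddBelow ((G V μ) '' B) := by
      intro V hV μ
      refine ⟨-(Cr + γ * CW), ?_⟩
      rintro y ⟨b, _, rfl⟩
      exact neg_le_of_abs_le (hGbound V hV μ b)
    have hInf : ∀ μ : PMF A, sInf ((G W₁ μ) '' B) ≤ sInf ((G W₂ μ) '' B) + γ * D := by
      intro μ
      have h2 : sInf ((G W₁ μ) '' B) - γ * D ≤ sInf ((G W₂ μ) '' B) := by
        refine le_csInf (Set.Nonempty.image _ ⟨b₀, hb₀⟩) ?_
        rintro y ⟨b, hb, rfl⟩
        have := csInf_le (hBddBelow W₁ hW₁ μ) (Set.mem_image_of_mem _ hb)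
        have := hGdiff μ b
        linarith
      linarith
    have hSupBdd : BddAbove (Set.range fun μ : PMF A => sInf ((G W₂ μ) '' B)) := by
      refine ⟨Cr + γ * CW, ?_⟩
      rintro y ⟨μ, rfl⟩
      exact le_trans (csInf_le (hBddBelow W₂ hW₂ μ) (Set.mem_image_of_mem _ hb₀))
        (le_of_abs_le (hGbound W₂ hW₂ μ b₀))
    show (⨆ μ : PMF A, sInf ((G W₁ μ) '' B)) ≤ (⨆ μ : PMF A, sInf ((G W₂ μ) '' B)) + γ * D
    refine ciSup_le fun μ => ?_
    exact le_trans (hInf μ) (add_le_add_left (le_ciSup hSupBdd μ) _)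
  have hW₁ : ∀ y, |V₁ y| ≤ CW := fun y => le_trans (hC₁ y) (le_max_left _ _)
  have hW₂ : ∀ y, |V₂ y| ≤ CW := fun y => le_trans (hC₂ y) (le_max_right _ _)
  have h12 := main V₁ V₂ hW₁ hW₂ (fun y => le_trans (le_abs_self _) (hDle y))
  have h21 := main V₂ V₁ hW₂ hW₁
    (fun y => le_trans (neg_sub (V₁ y) (V₂ y) ▸ neg_le_abs _) (hDle y))
  refine ciSup_le fun x => ?_
  rw [abs_le]
  constructor
  · have := h21 x; linarith
  · have := h12 x; linarith
end
end

section
/- Let S and A be nonempty finite sets, let γ ∈ [0,1), let π : S → PMF(A) be a policy, let ρ⁰ ∈ PMF(S), and let (P_t)_{t ∈ ℕ} and (r_t)_{t ∈ ℕ} be sequences of transition kernels P_t : S → A → PMF(S) and reward functions r_t : S × A → [0,1] such that for every t ∈ ℕ, s ∈ S, a ∈ A: Σ_{s' ∈ S} |P_t(s,a)(s') − P_{t+1}(s,a)(s')| ≤ L_P and |r_t(s,a) − r_{t+1}(s,a)| ≤ L_r, with L_P, L_r ≥ 0. Let J(π, t) denote the expected discounted return of π in the stationary MDP with kernel P_t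 and reward r_t, i.e. J(π, t) = Σ_{k=0}^{∞} γ^k · Σ_s μ_k^t(s) · Σ_a π(s)(a) · r_t(s,a) with μ₀^t = ρ⁰ and μ_{k+1}^t(s') = Σ_s μ_k^t(s) · Σ_a π(s)(a) · P_t(s,a)(s'). Then for all t₀ ∈ ℕ and t ∈ ℕ, |J(π, t₀) − J(π, t₀ + t)| ≤ L' · t, where L' = γ·L_P/(1−γ)² + L_r/(1−γ). -/
noncomputable section

/-- Policy-mixed one-step state-to-state kernel: `K^π(s'|s) = ∑_a π(s)(a) · K(s,a)(s')`. -/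
def kerPi {S A : Type*} [Fintype A] (π : S → PMF A) (K : S → A → PMF S)
    (s s' : S) : ℝ :=
  ∑ a : A, ((π s) a).toReal * ((K s a) s').toReal

/-- State distribution at time step `k` under policy `π`, kernel `K` and initial
distribution `ρ`: `μ₀ = ρ`, `μ_{k+1}(s') = ∑_s μ_k(s) · ∑_a π(s)(a) · K(s,a)(s')`. -/
def stateDist {S A : Type*} [Fintype S] [Fintype A] (π : S → PMF A)
    (K : S → A → PMF S) (ρ : PMF S) : ℕ → S → ℝ
  | 0 => fun s => (ρ s).toReal
  | (k + 1) => fun s' => ∑ s : S, stateDist π K ρ k s * kerPi π K s s'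

/-- Discounted state occupancy measure `d^π(s) = (1-γ) ∑_{k≥0} γ^k μ_k(s)`. -/
def occ {S A : Type*} [Fintype S] [Fintype A] (γ : ℝ) (π : S → PMF A)
    (K : S → A → PMF S) (ρ : PMF S) (s : S) : ℝ :=
  (1 - γ) * ∑' k : ℕ, γ ^ k * stateDist π K ρ k s

/-- Expected discounted return
`J(π, K, r) = ∑_{k≥0} γ^k ∑_s μ_k(s) ∑_a π(s)(a) r(s,a)`. -/
def ret {S A : Type*} [Fintype S] [Fintype A] (γ : ℝ) (π : S → PMF A)
    (K : S → A → PMF S) (ρ : PMF S) (r : S × A → ℝ) : ℝ :=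
  ∑' k : ℕ, γ ^ k * ∑ s : S, stateDist π K ρ k s * ∑ a : A, ((π s) a).toReal * r (s, a)

section Aux

variable {S A : Type*} [Fintype S] [Fintype A]

lemma pmf_sum_toReal {X : Type*} [Fintype X] (p : PMF X) : ∑ x : X, (p x).toReal = 1 := by
  rw [← ENNReal.toReal_sum fun x _ => p.apply_ne_top x, ← tsum_fintype (L := SummationFilter.unconditional X), p.tsum_coe,
    ENNReal.toReal_one]

lemma kerPi_nonneg (π : S → PMF A) (K : S → A → PMF S) (s s' : S) : 0 ≤ kerPi π K s s' :=
  Finset.sum_nonneg fun a _ => mul_nonneg ENNReal.toReal_nonneg ENNReal.toReal_nonneg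

lemma sum_kerPi (π : S → PMF A) (K : S → A → PMF S) (s : S) :
    ∑ s' : S, kerPi π K s s' = 1 := by
  unfold kerPi
  rw [Finset.sum_comm]
  have : ∀ a : A, ∑ s' : S, ((π s) a).toReal * ((K s a) s').toReal = ((π s) a).toReal := by
    intro a
    rw [← Finset.mul_sum, pmf_sum_toReal, mul_one]
  simp only [this]
  exact pmf_sum_toReal _

lemma stateDist_nonneg (π : S → PMF A) (K : S → A → PMF S) (ρ : PMF S) :
    ∀ k s, 0 ≤ stateDist π K ρ k s := by
  intro k
  induction k with
  | zero => intro s; exact ENNReal.toReal_nonneg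
  | succ k ih =>
    intro s'
    exact Finset.sum_nonneg fun s _ => mul_nonneg (ih s) (kerPi_nonneg π K s s')

lemma sum_stateDist (π : S → PMF A) (K : S → A → PMF S) (ρ : PMF S) :
    ∀ k, ∑ s : S, stateDist π K ρ k s = 1 := by
  intro k
  induction k with
  | zero => exact pmf_sum_toReal ρ
  | succ k ih =>
    show ∑ s' : S, ∑ s : S, stateDist π K ρ k s * kerPi π K s s' = 1
    rw [Finset.sum_comm]
    calc ∑ s : S, ∑ s' : S, stateDist π K ρ k s * kerPi π K s s'
        = ∑ s : S, stateDist π K ρ k s := by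
          refine Finset.sum_congr rfl fun s _ => ?_
          rw [← Finset.mul_sum, sum_kerPi, mul_one]
      _ = 1 := ih

lemma kerPi_drift (π : S → PMF A) (K1 K2 : S → A → PMF S) (L : ℝ)
    (h : ∀ s a, ∑ s' : S, |((K1 s a) s').toReal - ((K2 s a) s').toReal| ≤ L) (s : S) :
    ∑ s' : S, |kerPi π K1 s s' - kerPi π K2 s s'| ≤ L := by
  calc ∑ s' : S, |kerPi π K1 s s' - kerPi π K2 s s'|
      ≤ ∑ s' : S, ∑ a : A, ((π s) a).toReal *
          |((K1 s a) s').toReal - ((K2 s a) s').toReal| := by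
        refine Finset.sum_le_sum fun s' _ => ?_
        unfold kerPi
        rw [← Finset.sum_sub_distrib]
        refine (Finset.abs_sum_le_sum_abs _ _).trans ?_
        refine Finset.sum_le_sum fun a _ => ?_
        rw [← mul_sub, abs_mul, abs_of_nonneg ENNReal.toReal_nonneg]
    _ = ∑ a : A, ((π s) a).toReal *
          ∑ s' : S, |((K1 s a) s').toReal - ((K2 s a) s').toReal| := by
        rw [Finset.sum_comm]; simp [Finset.mul_sum]
    _ ≤ ∑ a : A, ((π s) a).toReal * L := by
        refine Finset.sum_le_sum fun a _ => ?_
        exact mul_le_mul_of_nonneg_left (h s a) ENNReal.toReal_nonneg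
    _ = L := by rw [← Finset.sum_mul, pmf_sum_toReal, one_mul]

lemma stateDist_drift (π : S → PMF A) (K1 K2 : S → A → PMF S) (ρ : PMF S) (L : ℝ)
    (h : ∀ s a, ∑ s' : S, |((K1 s a) s').toReal - ((K2 s a) s').toReal| ≤ L) :
    ∀ k, ∑ s : S, |stateDist π K1 ρ k s - stateDist π K2 ρ k s| ≤ k * L := by
  intro k
  induction k with
  | zero => simp [stateDist]
  | succ k ih =>
    have hker := kerPi_drift π K1 K2 L h
    calc ∑ s' : S, |stateDist π K1 ρ (k+1) s' - stateDist π K2 ρ (k+1) s'|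
        ≤ ∑ s' : S, ∑ s : S,
            (|stateDist π K1 ρ k s - stateDist π K2 ρ k s| * kerPi π K1 s s'
              + stateDist π K2 ρ k s * |kerPi π K1 s s' - kerPi π K2 s s'|) := by
          refine Finset.sum_le_sum fun s' _ => ?_
          show |∑ s : S, stateDist π K1 ρ k s * kerPi π K1 s s'
              - ∑ s : S, stateDist π K2 ρ k s * kerPi π K2 s s'| ≤ _
          rw [← Finset.sum_sub_distrib]
          refine (Finset.abs_sum_le_sum_abs _ _).trans ?_
          refine Finset.sum_le_sum fun s _ => ?_
          have key : stateDist π K1 ρ k s * kerPi π K1 s s'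
              - stateDist π K2 ρ k s * kerPi π K2 s s'
              = (stateDist π K1 ρ k s - stateDist π K2 ρ k s) * kerPi π K1 s s'
                + stateDist π K2 ρ k s * (kerPi π K1 s s' - kerPi π K2 s s') := by ring
          rw [key]
          refine (abs_add_le _ _).trans ?_
          rw [abs_mul, abs_mul, abs_of_nonneg (kerPi_nonneg π K1 s s'),
            abs_of_nonneg (stateDist_nonneg π K2 ρ k s)]
      _ = (∑ s : S, |stateDist π K1 ρ k s - stateDist π K2 ρ k s| * ∑ s' : S, kerPi π K1 s s')
          + ∑ s : S, stateDist π K2 ρ k s * ∑ s' : S, |kerPi π K1 s s' - kerPi π K2 s s'| := by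
          rw [← Finset.sum_add_distrib]
          rw [Finset.sum_comm]
          simp [Finset.sum_add_distrib, Finset.mul_sum]
      _ = (∑ s : S, |stateDist π K1 ρ k s - stateDist π K2 ρ k s|)
            + ∑ s : S, stateDist π K2 ρ k s *
                ∑ s' : S, |kerPi π K1 s s' - kerPi π K2 s s'| := by
          congr 1
          exact Finset.sum_congr rfl fun s _ => by rw [sum_kerPi, mul_one]
      _ ≤ k * L + 1 * L := by
          refine add_le_add ih ?_
          calc ∑ s : S, stateDist π K2 ρ k s * ∑ s' : S, |kerPi π K1 s s' - kerPi π K2 s s'|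
              ≤ ∑ s : S, stateDist π K2 ρ k s * L := Finset.sum_le_sum fun s _ =>
                mul_le_mul_of_nonneg_left (hker s) (stateDist_nonneg π K2 ρ k s)
            _ = 1 * L := by rw [← Finset.sum_mul, sum_stateDist]
      _ = (k + 1 : ℕ) * L := by push_cast; ring

end Aux

section Aux2

variable {S A : Type*} [Fintype S] [Fintype A]

lemma mixR_mem (π : S → PMF A) (r : S × A → ℝ) (hr01 : ∀ x, r x ∈ Set.Icc (0:ℝ) 1) (s : S) :
    (∑ a : A, ((π s) a).toReal * r (s, a)) ∈ Set.Icc (0:ℝ) 1 := by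
  constructor
  · exact Finset.sum_nonneg fun a _ =>
      mul_nonneg ENNReal.toReal_nonneg (hr01 (s, a)).1
  · calc ∑ a : A, ((π s) a).toReal * r (s, a) ≤ ∑ a : A, ((π s) a).toReal := by
          refine Finset.sum_le_sum fun a _ => ?_
          nth_rewrite 2 [← mul_one (((π s) a).toReal)]
          exact mul_le_mul_of_nonneg_left (hr01 (s, a)).2 ENNReal.toReal_nonneg
      _ = 1 := pmf_sum_toReal _

lemma inner_mem (π : S → PMF A) (K : S → A → PMF S) (ρ : PMF S) (r : S × A → ℝ)
    (hr01 : ∀ x, r x ∈ Set.Icc (0:ℝ) 1) (k : ℕ) :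
    (∑ s : S, stateDist π K ρ k s * ∑ a : A, ((π s) a).toReal * r (s, a))
      ∈ Set.Icc (0:ℝ) 1 := by
  constructor
  · exact Finset.sum_nonneg fun s _ =>
      mul_nonneg (stateDist_nonneg π K ρ k s) (mixR_mem π r hr01 s).1
  · calc ∑ s : S, stateDist π K ρ k s * ∑ a : A, ((π s) a).toReal * r (s, a)
        ≤ ∑ s : S, stateDist π K ρ k s := by
          refine Finset.sum_le_sum fun s _ => ?_
          nth_rewrite 2 [← mul_one (stateDist π K ρ k s)]
          exact mul_le_mul_of_nonneg_left (mixR_mem π r hr01 s).2 (stateDist_nonneg π K ρ k s)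
      _ = 1 := sum_stateDist π K ρ k

lemma ret_summable (γ : ℝ) (hγ0 : 0 ≤ γ) (hγ1 : γ < 1) (π : S → PMF A)
    (K : S → A → PMF S) (ρ : PMF S) (r : S × A → ℝ)
    (hr01 : ∀ x, r x ∈ Set.Icc (0:ℝ) 1) :
    Summable (fun k : ℕ => γ ^ k *
      ∑ s : S, stateDist π K ρ k s * ∑ a : A, ((π s) a).toReal * r (s, a)) := by
  refine Summable.of_norm_bounded (summable_geometric_of_lt_one hγ0 hγ1) fun k => ?_
  rw [Real.norm_eq_abs, abs_mul, abs_of_nonneg (pow_nonneg hγ0 k)]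
  nth_rewrite 2 [← mul_one (γ ^ k)]
  refine mul_le_mul_of_nonneg_left ?_ (pow_nonneg hγ0 k)
  rw [abs_of_nonneg (inner_mem π K ρ r hr01 k).1]
  exact (inner_mem π K ρ r hr01 k).2

lemma ret_one_step (γ : ℝ) (hγ0 : 0 ≤ γ) (hγ1 : γ < 1) (π : S → PMF A)
    (K1 K2 : S → A → PMF S) (ρ : PMF S) (r1 r2 : S × A → ℝ)
    (hr1 : ∀ x, r1 x ∈ Set.Icc (0:ℝ) 1) (hr2 : ∀ x, r2 x ∈ Set.Icc (0:ℝ) 1)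
    (L_P L_r : ℝ) (hLP : 0 ≤ L_P) (hLr : 0 ≤ L_r)
    (hK : ∀ s a, ∑ s' : S, |((K1 s a) s').toReal - ((K2 s a) s').toReal| ≤ L_P)
    (hR : ∀ s a, |r1 (s, a) - r2 (s, a)| ≤ L_r) :
    |ret γ π K1 ρ r1 - ret γ π K2 ρ r2| ≤ γ * L_P / (1 - γ) ^ 2 + L_r / (1 - γ) := by
  have h1γ : (0:ℝ) < 1 - γ := by linarith
  set R1 : S → ℝ := fun s => ∑ a : A, ((π s) a).toReal * r1 (s, a) with hR1
  set R2 : S → ℝ := fun s => ∑ a : A, ((π s) a).toReal * r2 (s, a) with hR2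
  -- pointwise bound on the difference of inner sums
  have hRdiff : ∀ s : S, |R1 s - R2 s| ≤ L_r := by
    intro s
    rw [hR1, hR2]
    simp only
    rw [← Finset.sum_sub_distrib]
    refine (Finset.abs_sum_le_sum_abs _ _).trans ?_
    calc ∑ a : A, |((π s) a).toReal * r1 (s, a) - ((π s) a).toReal * r2 (s, a)|
        ≤ ∑ a : A, ((π s) a).toReal * L_r := by
          refine Finset.sum_le_sum fun a _ => ?_
          rw [← mul_sub, abs_mul, abs_of_nonneg ENNReal.toReal_nonneg]
          exact mul_le_mul_of_nonneg_left (hR s a) ENNReal.toReal_nonneg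
      _ = L_r := by rw [← Finset.sum_mul, pmf_sum_toReal, one_mul]
  have hD : ∀ k : ℕ,
      |(∑ s : S, stateDist π K1 ρ k s * R1 s) - ∑ s : S, stateDist π K2 ρ k s * R2 s|
        ≤ k * L_P + L_r := by
    intro k
    rw [← Finset.sum_sub_distrib]
    refine (Finset.abs_sum_le_sum_abs _ _).trans ?_
    calc ∑ s : S, |stateDist π K1 ρ k s * R1 s - stateDist π K2 ρ k s * R2 s|
        ≤ ∑ s : S, (|stateDist π K1 ρ k s - stateDist π K2 ρ k s| * 1
            + stateDist π K2 ρ k s * L_r) := by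
          refine Finset.sum_le_sum fun s _ => ?_
          have key : stateDist π K1 ρ k s * R1 s - stateDist π K2 ρ k s * R2 s
              = (stateDist π K1 ρ k s - stateDist π K2 ρ k s) * R1 s
                + stateDist π K2 ρ k s * (R1 s - R2 s) := by ring
          rw [key]
          refine (abs_add_le _ _).trans ?_
          gcongr
          · rw [abs_mul]
            refine mul_le_mul_of_nonneg_left ?_ (abs_nonneg _)
            rw [abs_of_nonneg (mixR_mem π r1 hr1 s).1]
            exact (mixR_mem π r1 hr1 s).2
          · rw [abs_mul, abs_of_nonneg (stateDist_nonneg π K2 ρ k s)]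
            exact mul_le_mul_of_nonneg_left (hRdiff s) (stateDist_nonneg π K2 ρ k s)
      _ = (∑ s : S, |stateDist π K1 ρ k s - stateDist π K2 ρ k s|)
            + (∑ s : S, stateDist π K2 ρ k s) * L_r := by
          rw [Finset.sum_add_distrib, Finset.sum_mul]; simp
      _ ≤ k * L_P + 1 * L_r := by
          gcongr
          · exact stateDist_drift π K1 K2 ρ L_P hK k
          · rw [sum_stateDist]
      _ = k * L_P + L_r := by ring
  have hs1 : Summable (fun k : ℕ => γ ^ k * ∑ s : S, stateDist π K1 ρ k s * R1 s) :=
    ret_summable γ hγ0 hγ1 π K1 ρ r1 hr1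
  have hs2 : Summable (fun k : ℕ => γ ^ k * ∑ s : S, stateDist π K2 ρ k s * R2 s) :=
    ret_summable γ hγ0 hγ1 π K2 ρ r2 hr2
  have hnorm : ‖γ‖ < 1 := by rwa [Real.norm_eq_abs, abs_of_nonneg hγ0]
  have hsg : Summable (fun k : ℕ => γ ^ k * (k * L_P + L_r)) := by
    have h1 : Summable (fun k : ℕ => (k : ℝ) * γ ^ k) := by
      have := summable_pow_mul_geometric_of_norm_lt_one 1 hnorm
      simpa using this
    have h2 : Summable (fun k : ℕ => γ ^ k) := summable_geometric_of_lt_one hγ0 hγ1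
    have := (h1.mul_right L_P).add (h2.mul_right L_r)
    refine this.congr fun k => ?_
    ring
  rw [ret, ret]
  show |(∑' k : ℕ, γ ^ k * ∑ s : S, stateDist π K1 ρ k s * R1 s)
      - ∑' k : ℕ, γ ^ k * ∑ s : S, stateDist π K2 ρ k s * R2 s| ≤ _
  rw [← Summable.tsum_sub hs1 hs2]
  have habs : ∀ k : ℕ,
      ‖γ ^ k * (∑ s : S, stateDist π K1 ρ k s * R1 s)
        - γ ^ k * (∑ s : S, stateDist π K2 ρ k s * R2 s)‖ ≤ γ ^ k * (k * L_P + L_r) := by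
    intro k
    rw [← mul_sub, Real.norm_eq_abs, abs_mul, abs_of_nonneg (pow_nonneg hγ0 k)]
    exact mul_le_mul_of_nonneg_left (hD k) (pow_nonneg hγ0 k)
  calc |∑' k : ℕ, (γ ^ k * (∑ s : S, stateDist π K1 ρ k s * R1 s)
          - γ ^ k * (∑ s : S, stateDist π K2 ρ k s * R2 s))|
      ≤ ∑' k : ℕ, γ ^ k * (k * L_P + L_r) := by
        refine (norm_tsum_le_tsum_norm ?_).trans (Summable.tsum_le_tsum habs ?_ hsg)
        · exact hsg.of_nonneg_of_le (fun k => norm_nonneg _) habs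
        · exact hsg.of_nonneg_of_le (fun k => norm_nonneg _) habs
    _ = γ * L_P / (1 - γ) ^ 2 + L_r / (1 - γ) := by
        have h1 : Summable (fun k : ℕ => (k : ℝ) * γ ^ k * L_P) := by
          refine Summable.mul_right L_P ?_
          have := summable_pow_mul_geometric_of_norm_lt_one 1 hnorm
          simpa using this
        have h2 : Summable (fun k : ℕ => γ ^ k * L_r) :=
          (summable_geometric_of_lt_one hγ0 hγ1).mul_right L_r
        have split : (fun k : ℕ => γ ^ k * (k * L_P + L_r))
            = fun k : ℕ => (k : ℝ) * γ ^ k * L_P + γ ^ k * L_r := by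
          funext k; ring
        rw [split, Summable.tsum_add h1 h2, tsum_mul_right, tsum_mul_right,
          tsum_coe_mul_geometric_of_norm_lt_one hnorm, tsum_geometric_of_lt_one hγ0 hγ1]
        field_simp

end Aux2

/-- For a time-constrained (Lipschitz) sequence of stationary MDPs, the
expected discounted return of a fixed policy varies at most linearly in time:
`|J(π, t₀) - J(π, t₀+t)| ≤ L' t` with `L' = γ L_P/(1-γ)² + L_r/(1-γ)`. -/
theorem ret_lipschitz_in_time {S A : Type*} [Fintype S] [Fintype A] [Nonempty S] [Nonempty A]
    (γ : ℝ) (hγ0 : 0 ≤ γ) (hγ1 : γ < 1)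
    (π : S → PMF A) (ρ : PMF S)
    (P : ℕ → S → A → PMF S) (r : ℕ → S × A → ℝ)
    (hr01 : ∀ t : ℕ, ∀ x, r t x ∈ Set.Icc (0 : ℝ) 1)
    (L_P L_r : ℝ) (hLP : 0 ≤ L_P) (hLr : 0 ≤ L_r)
    (hP : ∀ t : ℕ, ∀ s : S, ∀ a : A,
      ∑ s' : S, |((P t s a) s').toReal - ((P (t + 1) s a) s').toReal| ≤ L_P)
    (hr : ∀ t : ℕ, ∀ s : S, ∀ a : A, |r t (s, a) - r (t + 1) (s, a)| ≤ L_r) :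
    ∀ t₀ t : ℕ,
      |ret γ π (P t₀) ρ (r t₀) - ret γ π (P (t₀ + t)) ρ (r (t₀ + t))| ≤
        (γ * L_P / (1 - γ) ^ 2 + L_r / (1 - γ)) * t := by
  intro t₀ t
  induction t with
  | zero => simp
  | succ t ih =>
    have step := ret_one_step γ hγ0 hγ1 π (P (t₀ + t)) (P (t₀ + t + 1)) ρ
      (r (t₀ + t)) (r (t₀ + t + 1)) (hr01 _) (hr01 _) L_P L_r hLP hLr
      (hP (t₀ + t)) (hr (t₀ + t))
    have tri : |ret γ π (P t₀) ρ (r t₀) - ret γ π (P (t₀ + (t+1))) ρ (r (t₀ + (t+1)))|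
        ≤ |ret γ π (P t₀) ρ (r t₀) - ret γ π (P (t₀ + t)) ρ (r (t₀ + t))|
          + |ret γ π (P (t₀ + t)) ρ (r (t₀ + t))
              - ret γ π (P (t₀ + t + 1)) ρ (r (t₀ + t + 1))| := by
      have : t₀ + (t + 1) = t₀ + t + 1 := by ring
      rw [this]
      exact abs_sub_le _ _ _
    refine tri.trans ?_
    push_cast
    calc _ ≤ (γ * L_P / (1 - γ) ^ 2 + L_r / (1 - γ)) * t
          + (γ * L_P / (1 - γ) ^ 2 + L_r / (1 - γ)) := add_le_add ih step
      _ = (γ * L_P / (1 - γ) ^ 2 + L_r / (1 - γ)) * (t + 1) := by ring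
end
end
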